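/- arXiv:2403.06971 — 2 statements merged into one kernel-verified Lean document; each statement's English description precedes it below -/
import Mathlib

section
/- Let reg denote the infimum over all subspaces W ⊆ H with dim W ≤ r of sup_{f ∈ F} inf_{w ∈ W} ‖f − w‖², and for an integer d > r let reg_d denote the infimum over all subspaces W ⊆ span{φ_1, …, φ_d} with dim W ≤ r of sup over {f ∈ F : ⟨f, φ_j⟩ = 0 for all j > d} of inf_{w ∈ W} ‖f − w‖². Then reg_d ≤ reg ≤ reg_d + λ_{d+1}; consequently reg = lim_{d→∞} reg_d. -/
open scoped RealInnerProductSpace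

namespace Stmt17Aux

variable {H : Type*} [NormedAddCommGroup H] [InnerProductSpace ℝ H]

noncomputable def pd (phi : ℕ → H) (d : ℕ) : H →ₗ[ℝ] H where
  toFun f := ∑ j ∈ Finset.range d, ⟪f, phi j⟫ • phi j
  map_add' f g := by
    simp [inner_add_left, add_smul, Finset.sum_add_distrib]
  map_smul' c f := by
    simp [inner_smul_left, smul_smul, Finset.smul_sum]

lemma pd_apply (phi : ℕ → H) (d : ℕ) (f : H) :
    pd phi d f = ∑ j ∈ Finset.range d, ⟪f, phi j⟫ • phi j := rfl

lemma pd_inner {phi : ℕ → H} (hphi : Orthonormal ℝ phi) (d j : ℕ) (f : H) :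
    ⟪pd phi d f, phi j⟫ = if j < d then ⟪f, phi j⟫ else 0 := by
  rw [pd_apply, sum_inner]
  have h := orthonormal_iff_ite.mp hphi
  simp only [real_inner_smul_left, h, mul_ite, mul_one, mul_zero]
  simp [Finset.sum_ite_eq, Finset.mem_range]

lemma pd_mem_span (phi : ℕ → H) (d : ℕ) (f : H) :
    pd phi d f ∈ Submodule.span ℝ (phi '' Set.Iio d) := by
  rw [pd_apply]
  refine Submodule.sum_mem _ fun j hj => Submodule.smul_mem _ _ ?_
  exact Submodule.subset_span ⟨j, Finset.mem_range.mp hj, rfl⟩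

lemma pd_fix {phi : ℕ → H} (hphi : Orthonormal ℝ phi) (d : ℕ) :
    ∀ w ∈ Submodule.span ℝ (phi '' Set.Iio d), pd phi d w = w := by
  intro w hw
  induction hw using Submodule.span_induction with
  | mem x hx =>
    obtain ⟨j, hj, rfl⟩ := hx
    rw [pd_apply]
    have h := orthonormal_iff_ite.mp hphi
    simp only [h, ite_smul, one_smul, zero_smul]
    rw [Finset.sum_ite_eq (Finset.range d) j phi, if_pos (Finset.mem_range.mpr hj)]
  | zero => simp
  | add x y _ _ hx hy => rw [map_add, hx, hy]
  | smul c x _ hx => rw [map_smul, hx]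

lemma pd_orth {phi : ℕ → H} (hphi : Orthonormal ℝ phi) (d : ℕ) (f : H) :
    ∀ w ∈ Submodule.span ℝ (phi '' Set.Iio d), ⟪w, f - pd phi d f⟫ = 0 := by
  intro w hw
  induction hw using Submodule.span_induction with
  | mem x hx =>
    obtain ⟨j, hj, rfl⟩ := hx
    rw [real_inner_comm, inner_sub_left, pd_inner hphi, if_pos (Set.mem_Iio.mp hj), sub_self]
  | zero => simp
  | add x y _ _ hx hy => rw [inner_add_left, hx, hy, add_zero]
  | smul c x _ hx => rw [real_inner_smul_left, hx, mul_zero]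

lemma pythagoras {phi : ℕ → H} (hphi : Orthonormal ℝ phi) (d : ℕ) (f w : H)
    (hw : w ∈ Submodule.span ℝ (phi '' Set.Iio d)) :
    ‖f - w‖ ^ 2 = ‖pd phi d f - w‖ ^ 2 + ‖f - pd phi d f‖ ^ 2 := by
  have horth : ⟪pd phi d f - w, f - pd phi d f⟫ = 0 :=
    pd_orth hphi d f _ (Submodule.sub_mem _ (pd_mem_span phi d f) hw)
  have h : f - w = (pd phi d f - w) + (f - pd phi d f) := by abel
  rw [h, norm_add_sq_real, horth]
  ring

lemma pd_contract {phi : ℕ → H} (hphi : Orthonormal ℝ phi) (d : ℕ) (x : H) :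
    ‖pd phi d x‖ ^ 2 ≤ ‖x‖ ^ 2 := by
  have h := pythagoras hphi d x 0 (Submodule.zero_mem _)
  simp only [sub_zero] at h
  nlinarith [sq_nonneg ‖x - pd phi d x‖]

end Stmt17Aux

open Stmt17Aux

set_option maxHeartbeats 1000000 in
/-- Finite-dimensional approximation of the Hilbert-space minimax regret:
with `reg` the infimum over subspaces `W` with `dim W ≤ r` of
`sup_{f ∈ F} inf_{w ∈ W} ‖f − w‖²`, and `regd d` the same infimum restricted to subspaces
`W ⊆ span{φ_1,…,φ_d}` and to `f ∈ F` with `⟨f, φ_j⟩ = 0` for all `j > d` (0-based: `j ≥ d`),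
one has `regd d ≤ reg ≤ regd d + λ_{d+1}` for every `d > r` (0-based: `λ_{d+1} = lam d`);
consequently `reg = lim_{d→∞} regd d`. -/
theorem stmt17 {H : Type*} [NormedAddCommGroup H] [InnerProductSpace ℝ H]
    [CompleteSpace H]
    (phi : ℕ → H) (hphi : Orthonormal ℝ phi)
    (htot : (Submodule.span ℝ (Set.range phi)).topologicalClosure = ⊤)
    (lam : ℕ → ℝ) (hpos : ∀ j, 0 < lam j) (hmono : Antitone lam)
    (hlim : Filter.Tendsto lam Filter.atTop (nhds 0))
    (r : ℕ) (hr : 0 < r) :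
    let F : Set H := { f | (Summable fun j => ⟪f, phi j⟫ ^ 2 / lam j) ∧
        (∑' j, ⟪f, phi j⟫ ^ 2 / lam j) ≤ 1 }
    let reg : ℝ := sInf { v : ℝ | ∃ W : Submodule ℝ H,
        Module.rank ℝ ↥W ≤ (r : Cardinal) ∧
        v = sSup { u : ℝ | ∃ f ∈ F,
            u = sInf { t : ℝ | ∃ w ∈ W, t = ‖f - w‖ ^ 2 } } }
    let regd : ℕ → ℝ := fun d => sInf { v : ℝ | ∃ W : Submodule ℝ H,
        W ≤ Submodule.span ℝ (phi '' Set.Iio d) ∧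
        Module.rank ℝ ↥W ≤ (r : Cardinal) ∧
        v = sSup { u : ℝ | ∃ f ∈ F, (∀ j, d ≤ j → ⟪f, phi j⟫ = 0) ∧
            u = sInf { t : ℝ | ∃ w ∈ W, t = ‖f - w‖ ^ 2 } } }
    (∀ d : ℕ, r < d → regd d ≤ reg ∧ reg ≤ regd d + lam d)
    ∧ Filter.Tendsto regd Filter.atTop (nhds reg) := by
  intro F reg regd
  classical
  -- Hilbert basis facts
  have hnorm : ∀ g : H, HasSum (fun j => ⟪g, phi j⟫ ^ 2) (‖g‖ ^ 2) := by
    intro g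
    have h := (HilbertBasis.mk hphi htot.ge).hasSum_inner_mul_inner g g
    rw [HilbertBasis.coe_mk] at h
    simp only [real_inner_self_eq_norm_sq] at h
    convert h using 2 with j
    · rfl
    rw [real_inner_comm g (phi j), sq]
  -- basic bounds
  have hFnorm : ∀ f ∈ F, ‖f‖ ^ 2 ≤ lam 0 := by
    rintro f ⟨hs, hle⟩
    have h1 : ‖f‖ ^ 2 = ∑' j, ⟪f, phi j⟫ ^ 2 := (hnorm f).tsum_eq.symm
    have h2 : ∀ j, ⟪f, phi j⟫ ^ 2 ≤ lam 0 * (⟪f, phi j⟫ ^ 2 / lam j) := by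
      intro j
      have hj := hpos j
      calc ⟪f, phi j⟫ ^ 2 = lam j * (⟪f, phi j⟫ ^ 2 / lam j) := by field_simp
        _ ≤ lam 0 * (⟪f, phi j⟫ ^ 2 / lam j) :=
          mul_le_mul_of_nonneg_right (hmono (Nat.zero_le j)) (by positivity)
    calc ‖f‖ ^ 2 = ∑' j, ⟪f, phi j⟫ ^ 2 := h1
      _ ≤ ∑' j, lam 0 * (⟪f, phi j⟫ ^ 2 / lam j) :=
        Summable.tsum_le_tsum h2 (hnorm f).summable (hs.mul_left _)
      _ = lam 0 * ∑' j, ⟪f, phi j⟫ ^ 2 / lam j := tsum_mul_left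
      _ ≤ lam 0 * 1 := mul_le_mul_of_nonneg_left hle (hpos 0).le
      _ = lam 0 := mul_one _
  have h0F : (0 : H) ∈ F := by
    constructor
    · simp only [inner_zero_left, ne_eq, zero_pow, zero_div, OfNat.ofNat_ne_zero,
        not_false_eq_true]
      exact summable_zero
    · simp only [inner_zero_left, ne_eq, zero_pow, zero_div, OfNat.ofNat_ne_zero,
        not_false_eq_true, tsum_zero]
      norm_num
  have hTne : ∀ (W : Submodule ℝ H) (f : H),
      Set.Nonempty { t : ℝ | ∃ w ∈ W, t = ‖f - w‖ ^ 2 } :=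
    fun W f => ⟨‖f - 0‖ ^ 2, 0, W.zero_mem, rfl⟩
  have hTbdd : ∀ (W : Submodule ℝ H) (f : H),
      BddBelow { t : ℝ | ∃ w ∈ W, t = ‖f - w‖ ^ 2 } := by
    rintro W f
    refine ⟨0, ?_⟩
    rintro t ⟨w, hw, rfl⟩
    positivity
  have hInn : ∀ (W : Submodule ℝ H) (f : H),
      0 ≤ sInf { t : ℝ | ∃ w ∈ W, t = ‖f - w‖ ^ 2 } := by
    intro W f
    refine le_csInf (hTne W f) ?_
    rintro t ⟨w, hw, rfl⟩
    positivity
  have hIle : ∀ (W : Submodule ℝ H) (f : H),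
      sInf { t : ℝ | ∃ w ∈ W, t = ‖f - w‖ ^ 2 } ≤ ‖f‖ ^ 2 := by
    intro W f
    have : ‖f‖ ^ 2 = ‖f - 0‖ ^ 2 := by simp
    rw [this]
    exact csInf_le (hTbdd W f) ⟨0, W.zero_mem, rfl⟩
  -- the unrestricted sup-sets
  have hSbdd : ∀ W : Submodule ℝ H, BddAbove { u : ℝ | ∃ f ∈ F,
      u = sInf { t : ℝ | ∃ w ∈ W, t = ‖f - w‖ ^ 2 } } := by
    intro W
    refine ⟨lam 0, ?_⟩
    rintro u ⟨f, hf, rfl⟩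
    exact le_trans (hIle W f) (hFnorm f hf)
  have hSne : ∀ W : Submodule ℝ H, Set.Nonempty { u : ℝ | ∃ f ∈ F,
      u = sInf { t : ℝ | ∃ w ∈ W, t = ‖f - w‖ ^ 2 } } :=
    fun W => ⟨_, 0, h0F, rfl⟩
  -- the restricted sup-sets
  have hSdbdd : ∀ (d : ℕ) (W : Submodule ℝ H), BddAbove { u : ℝ | ∃ f ∈ F,
      (∀ j, d ≤ j → ⟪f, phi j⟫ = 0) ∧
      u = sInf { t : ℝ | ∃ w ∈ W, t = ‖f - w‖ ^ 2 } } := by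
    intro d W
    refine ⟨lam 0, ?_⟩
    rintro u ⟨f, hf, -, rfl⟩
    exact le_trans (hIle W f) (hFnorm f hf)
  have hSdne : ∀ (d : ℕ) (W : Submodule ℝ H), Set.Nonempty { u : ℝ | ∃ f ∈ F,
      (∀ j, d ≤ j → ⟪f, phi j⟫ = 0) ∧
      u = sInf { t : ℝ | ∃ w ∈ W, t = ‖f - w‖ ^ 2 } } :=
    fun d W => ⟨_, 0, h0F, fun j _ => by simp, rfl⟩
  -- the reg / regd index sets
  have hAne : Set.Nonempty { v : ℝ | ∃ W : Submodule ℝ H,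
      Module.rank ℝ ↥W ≤ (r : Cardinal) ∧
      v = sSup { u : ℝ | ∃ f ∈ F,
          u = sInf { t : ℝ | ∃ w ∈ W, t = ‖f - w‖ ^ 2 } } } := by
    refine ⟨_, ⊥, ?_, rfl⟩
    rw [rank_bot]
    exact zero_le
  have hAbdd : BddBelow { v : ℝ | ∃ W : Submodule ℝ H,
      Module.rank ℝ ↥W ≤ (r : Cardinal) ∧
      v = sSup { u : ℝ | ∃ f ∈ F,
          u = sInf { t : ℝ | ∃ w ∈ W, t = ‖f - w‖ ^ 2 } } } := by
    refine ⟨0, ?_⟩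
    rintro v ⟨W, hW, rfl⟩
    exact le_trans (hInn W 0) (le_csSup (hSbdd W) ⟨0, h0F, rfl⟩)
  have hBne : ∀ d : ℕ, Set.Nonempty { v : ℝ | ∃ W : Submodule ℝ H,
      W ≤ Submodule.span ℝ (phi '' Set.Iio d) ∧
      Module.rank ℝ ↥W ≤ (r : Cardinal) ∧
      v = sSup { u : ℝ | ∃ f ∈ F, (∀ j, d ≤ j → ⟪f, phi j⟫ = 0) ∧
          u = sInf { t : ℝ | ∃ w ∈ W, t = ‖f - w‖ ^ 2 } } } := by
    intro d
    refine ⟨_, ⊥, bot_le, ?_, rfl⟩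
    rw [rank_bot]
    exact zero_le
  have hBbdd : ∀ d : ℕ, BddBelow { v : ℝ | ∃ W : Submodule ℝ H,
      W ≤ Submodule.span ℝ (phi '' Set.Iio d) ∧
      Module.rank ℝ ↥W ≤ (r : Cardinal) ∧
      v = sSup { u : ℝ | ∃ f ∈ F, (∀ j, d ≤ j → ⟪f, phi j⟫ = 0) ∧
          u = sInf { t : ℝ | ∃ w ∈ W, t = ‖f - w‖ ^ 2 } } } := by
    intro d
    refine ⟨0, ?_⟩
    rintro v ⟨W, hWs, hWr, rfl⟩
    exact le_trans (hInn W 0) (le_csSup (hSdbdd d W) ⟨0, h0F, fun j _ => by simp, rfl⟩)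
  -- first inequality : regd d ≤ reg
  have h1 : ∀ d : ℕ, regd d ≤ reg := by
    intro d
    refine le_csInf hAne ?_
    rintro v ⟨W, hWr, rfl⟩
    have hW'span : W.map (pd phi d) ≤ Submodule.span ℝ (phi '' Set.Iio d) := by
      rintro x ⟨w, hw, rfl⟩
      exact pd_mem_span phi d w
    have hW'r : Module.rank ℝ ↥(W.map (pd phi d)) ≤ (r : Cardinal) :=
      le_trans (rank_map_le _ _) hWr
    refine le_trans (csInf_le (hBbdd d) ⟨W.map (pd phi d), hW'span, hW'r, rfl⟩) ?_
    refine csSup_le (hSdne d _) ?_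
    rintro u ⟨f, hfF, hftail, rfl⟩
    have hf_fix : pd phi d f = f := by
      have hc : ∀ j, ⟪f - pd phi d f, phi j⟫ = 0 := by
        intro j
        rw [inner_sub_left, pd_inner hphi]
        split
        · simp
        · next hj => rw [hftail j (Nat.le_of_not_lt hj), sub_zero]
      have h2 : HasSum (fun j => ⟪f - pd phi d f, phi j⟫ ^ 2) 0 := by
        have : (fun j => ⟪f - pd phi d f, phi j⟫ ^ 2) = fun _ => (0 : ℝ) := by
          funext j; rw [hc j]; ring
        rw [this]
        exact hasSum_zero
      have h3 : ‖f - pd phi d f‖ ^ 2 = 0 := (h2.unique (hnorm _)).symm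
      have h5 : ‖f - pd phi d f‖ = 0 := by
        nlinarith [norm_nonneg (f - pd phi d f)]
      have h4 : f - pd phi d f = 0 := norm_eq_zero.mp h5
      rw [sub_eq_zero] at h4
      exact h4.symm
    refine le_trans ?_ (le_csSup (hSbdd W) ⟨f, hfF, rfl⟩)
    refine le_csInf (hTne W f) ?_
    rintro t ⟨w, hw, rfl⟩
    refine le_trans (csInf_le (hTbdd _ f) ⟨pd phi d w, ⟨w, hw, rfl⟩, rfl⟩) ?_
    have he : f - pd phi d w = pd phi d (f - w) := by rw [map_sub, hf_fix]
    rw [he]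
    exact pd_contract hphi d _
  -- second inequality : reg ≤ regd d + lam d
  have h2 : ∀ d : ℕ, reg ≤ regd d + lam d := by
    intro d
    rw [← sub_le_iff_le_add]
    refine le_csInf (hBne d) ?_
    rintro v ⟨W, hWspan, hWr, rfl⟩
    rw [sub_le_iff_le_add]
    refine le_trans (csInf_le hAbdd ⟨W, hWr, rfl⟩) ?_
    refine csSup_le (hSne W) ?_
    rintro u ⟨f, hfF, rfl⟩
    obtain ⟨hsum, hle1⟩ := hfF
    -- tail bound
    have hT : ‖f - pd phi d f‖ ^ 2 ≤ lam d := by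
      have hcoord : ∀ j, ⟪f - pd phi d f, phi j⟫ = if j < d then 0 else ⟪f, phi j⟫ := by
        intro j
        rw [inner_sub_left, pd_inner hphi]
        split <;> simp
      have hlej : ∀ j, ⟪f - pd phi d f, phi j⟫ ^ 2 ≤ lam d * (⟪f, phi j⟫ ^ 2 / lam j) := by
        intro j
        rw [hcoord]
        split
        · have h1 := hpos j
          have h2 := hpos d
          have h3 : (0:ℝ) ≤ ⟪f, phi j⟫ ^ 2 / lam j := by positivity
          nlinarith
        · next hj =>
          have hdj : lam j ≤ lam d := hmono (Nat.le_of_not_lt hj)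
          have := hpos j
          calc ⟪f, phi j⟫ ^ 2 = lam j * (⟪f, phi j⟫ ^ 2 / lam j) := by field_simp
            _ ≤ lam d * (⟪f, phi j⟫ ^ 2 / lam j) :=
              mul_le_mul_of_nonneg_right hdj (by positivity)
      calc ‖f - pd phi d f‖ ^ 2 = ∑' j, ⟪f - pd phi d f, phi j⟫ ^ 2 :=
            (hnorm _).tsum_eq.symm
        _ ≤ ∑' j, lam d * (⟪f, phi j⟫ ^ 2 / lam j) :=
            Summable.tsum_le_tsum hlej (hnorm _).summable (hsum.mul_left _)
        _ = lam d * ∑' j, ⟪f, phi j⟫ ^ 2 / lam j := tsum_mul_left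
        _ ≤ lam d * 1 := mul_le_mul_of_nonneg_left hle1 (hpos d).le
        _ = lam d := mul_one _
    -- pd f belongs to F with vanishing tail
    have hfunj : ∀ j, ⟪pd phi d f, phi j⟫ ^ 2 / lam j
        = if j < d then ⟪f, phi j⟫ ^ 2 / lam j else 0 := by
      intro j
      rw [pd_inner hphi]
      split <;> simp
    have hfun : (fun j => ⟪pd phi d f, phi j⟫ ^ 2 / lam j)
        = fun j => if j < d then ⟪f, phi j⟫ ^ 2 / lam j else 0 := funext hfunj
    have hpdsum : Summable (fun j => ⟪pd phi d f, phi j⟫ ^ 2 / lam j) := by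
      rw [hfun]
      refine summable_of_ne_finset_zero (s := Finset.range d) ?_
      intro j hj
      rw [if_neg (fun h => hj (Finset.mem_range.mpr h))]
    have hpdF : pd phi d f ∈ F := by
      refine ⟨hpdsum, ?_⟩
      refine le_trans (Summable.tsum_le_tsum ?_ hpdsum hsum) hle1
      intro j
      rw [hfunj j]
      split
      · exact le_refl _
      · exact div_nonneg (sq_nonneg _) (hpos j).le
    have hpdtail : ∀ j, d ≤ j → ⟪pd phi d f, phi j⟫ = 0 := by
      intro j hj
      rw [pd_inner hphi, if_neg (Nat.not_lt.mpr hj)]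
    -- sInf over f ≤ sInf over pd f + tail
    have hstep : sInf { t : ℝ | ∃ w ∈ W, t = ‖f - w‖ ^ 2 }
        ≤ sInf { t : ℝ | ∃ w ∈ W, t = ‖pd phi d f - w‖ ^ 2 } + ‖f - pd phi d f‖ ^ 2 := by
      rw [← sub_le_iff_le_add]
      refine le_csInf (hTne W (pd phi d f)) ?_
      rintro t ⟨w, hw, rfl⟩
      rw [sub_le_iff_le_add]
      refine le_trans (csInf_le (hTbdd W f) ⟨w, hw, rfl⟩) ?_
      rw [pythagoras hphi d f w (hWspan hw)]
    refine le_trans hstep ?_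
    have hmem : sInf { t : ℝ | ∃ w ∈ W, t = ‖pd phi d f - w‖ ^ 2 }
        ≤ sSup { u : ℝ | ∃ f ∈ F, (∀ j, d ≤ j → ⟪f, phi j⟫ = 0) ∧
            u = sInf { t : ℝ | ∃ w ∈ W, t = ‖f - w‖ ^ 2 } } :=
      le_csSup (hSdbdd d W) ⟨pd phi d f, hpdF, hpdtail, rfl⟩
    linarith
  refine ⟨fun d _ => ⟨h1 d, h2 d⟩, ?_⟩
  have hg : Filter.Tendsto (fun d => reg - lam d) Filter.atTop (nhds reg) := by
    simpa using tendsto_const_nhds.sub hlim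
  refine tendsto_of_tendsto_of_tendsto_of_le_of_le hg tendsto_const_nhds
    (fun d => by linarith [h2 d]) (fun d => h1 d)
end

section
/- Suppose ℓ* > r is an integer satisfying (ℓ* − r)/λ_{ℓ*} ≤ Σ_{i=1}^{ℓ*}(1/λ_i) ≤ (ℓ* − r)/λ_{ℓ*+1}. Then there exist finitely many subsets I_1, …, I_m ⊆ {1, …, ℓ*}, each of cardinality r, and weights p_1, …, p_m ≥ 0 with Σ_j p_j = 1, such that for every f ∈ F: Σ_{j=1}^{m} p_j · inf_{w ∈ span{φ_i : i ∈ I_j}} ‖f − w‖² ≤ (ℓ* − r)/Σ_{i=1}^{ℓ*}(1/λ_i). -/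
open scoped RealInnerProductSpace


lemma sum_zero_one_eq_card (q : ℕ → ℝ) (s : Finset ℕ) (h : ∀ i ∈ s, q i = 0 ∨ q i = 1) :
    ∑ i ∈ s, q i = (s.filter (fun i => q i = 1)).card := by
  classical
  rw [Finset.card_filter]
  push_cast
  refine Finset.sum_congr rfl fun i hi => ?_
  rcases h i hi with h0 | h1
  · simp [h0]
  · simp [h1]

/-- Realizing given marginals `q` by a mixture of indicators of `r`-subsets. -/
lemma marginals (r : ℕ) : ∀ (k n : ℕ) (q : ℕ → ℝ),
    ((Finset.range n).filter (fun i => q i ≠ 0 ∧ q i ≠ 1)).card ≤ k →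
    (∀ i ∈ Finset.range n, 0 ≤ q i ∧ q i ≤ 1) →
    (∑ i ∈ Finset.range n, q i = r) →
    ∃ (m : ℕ) (I : Fin m → Finset ℕ) (p : Fin m → ℝ),
      (∀ j, I j ⊆ Finset.range n) ∧ (∀ j, (I j).card = r) ∧
      (∀ j, 0 ≤ p j) ∧ (∑ j, p j = 1) ∧
      (∀ i, i ∈ Finset.range n → ∑ j, p j * (if i ∈ I j then (1:ℝ) else 0) = q i) := by
  classical
  intro k
  induction k with
  | zero =>
    intro n q hcard hbd hsum
    rw [Nat.le_zero, Finset.card_eq_zero, Finset.filter_eq_empty_iff] at hcard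
    have h01 : ∀ i ∈ Finset.range n, q i = 0 ∨ q i = 1 := by
      intro i hi
      have := hcard hi
      by_contra hc
      push_neg at hc
      exact this ⟨hc.1, hc.2⟩
    set s := (Finset.range n).filter (fun i => q i = 1) with hs
    have hcardr : s.card = r := by
      have := (sum_zero_one_eq_card q _ h01).symm.trans hsum
      exact_mod_cast this
    refine ⟨1, fun _ => s, fun _ => 1, fun _ => Finset.filter_subset _ _, fun _ => hcardr,
      fun _ => zero_le_one, by simp, ?_⟩
    intro i hi
    rcases h01 i hi with h0 | h1
    · have : i ∉ s := by simp [hs, h0]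
      simp [this, h0]
    · have : i ∈ s := by simp [hs, h1, hi]
      simp [this, h1]
  | succ k ih =>
    intro n q hcard hbd hsum
    by_cases hk : ((Finset.range n).filter (fun i => q i ≠ 0 ∧ q i ≠ 1)).card ≤ k
    · exact ih n q hk hbd hsum
    push_neg at hk
    set F := (Finset.range n).filter (fun i => q i ≠ 0 ∧ q i ≠ 1) with hF
    -- F is nonempty; get i₀
    obtain ⟨i₀, hi₀F⟩ := Finset.card_pos.mp (lt_of_lt_of_le (Nat.succ_pos k) hk)
    -- there is a second fractional index
    have h2 : ∃ i₁ ∈ F, i₁ ≠ i₀ := by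
      by_contra hc
      push_neg at hc
      -- all other indices are 0/1
      have h01 : ∀ i ∈ (Finset.range n).erase i₀, q i = 0 ∨ q i = 1 := by
        intro i hi
        by_contra hq
        push_neg at hq
        exact (Finset.mem_erase.mp hi).1
          (hc i (Finset.mem_filter.mpr ⟨(Finset.mem_erase.mp hi).2, hq.1, hq.2⟩))
      have hi₀n : i₀ ∈ Finset.range n := (Finset.mem_filter.mp hi₀F).1
      have hfrac := (Finset.mem_filter.mp hi₀F).2
      have hbd₀ := hbd i₀ hi₀n
      have h0 : 0 < q i₀ := lt_of_le_of_ne hbd₀.1 (Ne.symm hfrac.1)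
      have h1 : q i₀ < 1 := lt_of_le_of_ne hbd₀.2 hfrac.2
      have hsplit : q i₀ + ∑ i ∈ (Finset.range n).erase i₀, q i = (r : ℝ) := by
        rw [Finset.add_sum_erase _ _ hi₀n]; exact hsum
      rw [sum_zero_one_eq_card q _ h01] at hsplit
      set c := (((Finset.range n).erase i₀).filter (fun i => q i = 1)).card
      rcases le_or_gt r c with h | h
      · have : (r : ℝ) ≤ (c : ℝ) := by exact_mod_cast h
        linarith
      · have : (c : ℝ) + 1 ≤ (r : ℝ) := by exact_mod_cast h
        linarith
    obtain ⟨i₁, hi₁F, hne⟩ := h2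
    have hi₀n : i₀ ∈ Finset.range n := (Finset.mem_filter.mp hi₀F).1
    have hi₁n : i₁ ∈ Finset.range n := (Finset.mem_filter.mp hi₁F).1
    have hf₀ := (Finset.mem_filter.mp hi₀F).2
    have hf₁ := (Finset.mem_filter.mp hi₁F).2
    have ha0 : 0 < q i₀ := lt_of_le_of_ne (hbd i₀ hi₀n).1 (Ne.symm hf₀.1)
    have ha1 : q i₀ < 1 := lt_of_le_of_ne (hbd i₀ hi₀n).2 hf₀.2
    have hb0 : 0 < q i₁ := lt_of_le_of_ne (hbd i₁ hi₁n).1 (Ne.symm hf₁.1)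
    have hb1 : q i₁ < 1 := lt_of_le_of_ne (hbd i₁ hi₁n).2 hf₁.2
    set a := q i₀
    set b := q i₁
    set ε₁ := min (1 - a) b with hε₁
    set ε₂ := min a (1 - b) with hε₂
    have hε₁0 : 0 < ε₁ := lt_min (by linarith) hb0
    have hε₂0 : 0 < ε₂ := lt_min ha0 (by linarith)
    have hεsum : 0 < ε₁ + ε₂ := by linarith
    set t := ε₂ / (ε₁ + ε₂) with ht
    have ht0 : 0 < t := div_pos hε₂0 hεsum
    have ht1 : t < 1 := by
      rw [ht, div_lt_one hεsum]; linarith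
    set q' : ℕ → ℝ := fun i => if i = i₀ then a + ε₁ else if i = i₁ then b - ε₁ else q i with hq'
    set q'' : ℕ → ℝ := fun i => if i = i₀ then a - ε₂ else if i = i₁ then b + ε₂ else q i with hq''
    have hq'i₀ : q' i₀ = a + ε₁ := by simp [hq']
    have hq'i₁ : q' i₁ = b - ε₁ := by simp [hq', hne]
    have hq''i₀ : q'' i₀ = a - ε₂ := by simp [hq'']
    have hq''i₁ : q'' i₁ = b + ε₂ := by simp [hq'', hne]
    have hq'o : ∀ i, i ≠ i₀ → i ≠ i₁ → q' i = q i := by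
      intro i h0 h1; simp [hq', h0, h1]
    have hq''o : ∀ i, i ≠ i₀ → i ≠ i₁ → q'' i = q i := by
      intro i h0 h1; simp [hq'', h0, h1]
    -- sums are preserved
    have hsum' : ∑ i ∈ Finset.range n, q' i = (r : ℝ) := by
      have hpt : ∀ i ∈ Finset.range n, q' i =
          q i + ((if i = i₀ then ε₁ else 0) + (if i = i₁ then -ε₁ else 0)) := by
        intro i _
        by_cases h0 : i = i₀
        · subst h0; simp [hq'i₀, Ne.symm hne]; rfl
        · by_cases h1 : i = i₁
          · subst h1; simp [hq'i₁, h0]; ring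
          · simp [hq'o i h0 h1, h0, h1]
      rw [Finset.sum_congr rfl hpt, Finset.sum_add_distrib, Finset.sum_add_distrib,
        Finset.sum_ite_eq' (Finset.range n) i₀ fun _ => ε₁,
        Finset.sum_ite_eq' (Finset.range n) i₁ fun _ => -ε₁]
      simp [hi₀n, hi₁n, hsum]
    have hsum'' : ∑ i ∈ Finset.range n, q'' i = (r : ℝ) := by
      have hpt : ∀ i ∈ Finset.range n, q'' i =
          q i + ((if i = i₀ then -ε₂ else 0) + (if i = i₁ then ε₂ else 0)) := by
        intro i _
        by_cases h0 : i = i₀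
        · subst h0; simp [hq''i₀, Ne.symm hne]; ring
        · by_cases h1 : i = i₁
          · subst h1; simp [hq''i₁, h0]; rfl
          · simp [hq''o i h0 h1, h0, h1]
      rw [Finset.sum_congr rfl hpt, Finset.sum_add_distrib, Finset.sum_add_distrib,
        Finset.sum_ite_eq' (Finset.range n) i₀ fun _ => -ε₂,
        Finset.sum_ite_eq' (Finset.range n) i₁ fun _ => ε₂]
      simp [hi₀n, hi₁n, hsum]
    -- bounds preserved
    have hε₁a : ε₁ ≤ 1 - a := min_le_left _ _
    have hε₁b : ε₁ ≤ b := min_le_right _ _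
    have hε₂a : ε₂ ≤ a := min_le_left _ _
    have hε₂b : ε₂ ≤ 1 - b := min_le_right _ _
    have hbd' : ∀ i ∈ Finset.range n, 0 ≤ q' i ∧ q' i ≤ 1 := by
      intro i hi
      by_cases h0 : i = i₀
      · subst h0; rw [hq'i₀]; constructor <;> linarith
      · by_cases h1 : i = i₁
        · subst h1; rw [hq'i₁]; constructor <;> linarith
        · rw [hq'o i h0 h1]; exact hbd i hi
    have hbd'' : ∀ i ∈ Finset.range n, 0 ≤ q'' i ∧ q'' i ≤ 1 := by
      intro i hi
      by_cases h0 : i = i₀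
      · subst h0; rw [hq''i₀]; constructor <;> linarith
      · by_cases h1 : i = i₁
        · subst h1; rw [hq''i₁]; constructor <;> linarith
        · rw [hq''o i h0 h1]; exact hbd i hi
    -- fractional count decreases
    have hcard' : ((Finset.range n).filter (fun i => q' i ≠ 0 ∧ q' i ≠ 1)).card ≤ k := by
      have hsub : ∃ j ∈ F,
          ((Finset.range n).filter (fun i => q' i ≠ 0 ∧ q' i ≠ 1)) ⊆ F.erase j := by
        rcases le_total (1 - a) b with hcase | hcase
        · refine ⟨i₀, hi₀F, ?_⟩
          have h1 : q' i₀ = 1 := by rw [hq'i₀, hε₁, min_eq_left hcase]; ring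
          intro i hi
          rw [Finset.mem_filter] at hi
          have hii₀ : i ≠ i₀ := by rintro rfl; exact hi.2.2 h1
          refine Finset.mem_erase.mpr ⟨hii₀, ?_⟩
          by_cases h1' : i = i₁
          · subst h1'; exact hi₁F
          · rw [hF, Finset.mem_filter]
            refine ⟨hi.1, ?_⟩
            rw [← hq'o i hii₀ h1']; exact hi.2
        · refine ⟨i₁, hi₁F, ?_⟩
          have h1 : q' i₁ = 0 := by rw [hq'i₁, hε₁, min_eq_right hcase]; ring
          intro i hi
          rw [Finset.mem_filter] at hi
          have hii₁ : i ≠ i₁ := by rintro rfl; exact hi.2.1 h1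
          refine Finset.mem_erase.mpr ⟨hii₁, ?_⟩
          by_cases h0' : i = i₀
          · subst h0'; exact hi₀F
          · rw [hF, Finset.mem_filter]
            refine ⟨hi.1, ?_⟩
            rw [← hq'o i h0' hii₁]; exact hi.2
      obtain ⟨j, hjF, hsub⟩ := hsub
      calc ((Finset.range n).filter (fun i => q' i ≠ 0 ∧ q' i ≠ 1)).card
          ≤ (F.erase j).card := Finset.card_le_card hsub
        _ = F.card - 1 := Finset.card_erase_of_mem hjF
        _ ≤ k := by omega
    have hcard'' : ((Finset.range n).filter (fun i => q'' i ≠ 0 ∧ q'' i ≠ 1)).card ≤ k := by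
      have hsub : ∃ j ∈ F,
          ((Finset.range n).filter (fun i => q'' i ≠ 0 ∧ q'' i ≠ 1)) ⊆ F.erase j := by
        rcases le_total a (1 - b) with hcase | hcase
        · refine ⟨i₀, hi₀F, ?_⟩
          have h1 : q'' i₀ = 0 := by rw [hq''i₀, hε₂, min_eq_left hcase]; ring
          intro i hi
          rw [Finset.mem_filter] at hi
          have hii₀ : i ≠ i₀ := by rintro rfl; exact hi.2.1 h1
          refine Finset.mem_erase.mpr ⟨hii₀, ?_⟩
          by_cases h1' : i = i₁
          · subst h1'; exact hi₁F
          · rw [hF, Finset.mem_filter]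
            refine ⟨hi.1, ?_⟩
            rw [← hq''o i hii₀ h1']; exact hi.2
        · refine ⟨i₁, hi₁F, ?_⟩
          have h1 : q'' i₁ = 1 := by rw [hq''i₁, hε₂, min_eq_right hcase]; ring
          intro i hi
          rw [Finset.mem_filter] at hi
          have hii₁ : i ≠ i₁ := by rintro rfl; exact hi.2.2 h1
          refine Finset.mem_erase.mpr ⟨hii₁, ?_⟩
          by_cases h0' : i = i₀
          · subst h0'; exact hi₀F
          · rw [hF, Finset.mem_filter]
            refine ⟨hi.1, ?_⟩
            rw [← hq''o i h0' hii₁]; exact hi.2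
      obtain ⟨j, hjF, hsub⟩ := hsub
      calc ((Finset.range n).filter (fun i => q'' i ≠ 0 ∧ q'' i ≠ 1)).card
          ≤ (F.erase j).card := Finset.card_le_card hsub
        _ = F.card - 1 := Finset.card_erase_of_mem hjF
        _ ≤ k := by omega
    obtain ⟨m₁, I₁, p₁, hI₁sub, hI₁card, hp₁0, hp₁sum, hmarg₁⟩ := ih n q' hcard' hbd' hsum'
    obtain ⟨m₂, I₂, p₂, hI₂sub, hI₂card, hp₂0, hp₂sum, hmarg₂⟩ := ih n q'' hcard'' hbd'' hsum''
    refine ⟨m₁ + m₂, Fin.addCases I₁ I₂,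
      Fin.addCases (fun j => t * p₁ j) (fun j => (1 - t) * p₂ j), ?_, ?_, ?_, ?_, ?_⟩
    · intro j
      refine Fin.addCases (fun j' => ?_) (fun j' => ?_) j
      · simpa using hI₁sub j'
      · simpa using hI₂sub j'
    · intro j
      refine Fin.addCases (fun j' => ?_) (fun j' => ?_) j
      · simpa using hI₁card j'
      · simpa using hI₂card j'
    · intro j
      refine Fin.addCases (fun j' => ?_) (fun j' => ?_) j
      · simpa using mul_nonneg ht0.le (hp₁0 j')
      · simpa using mul_nonneg (by linarith : (0:ℝ) ≤ 1 - t) (hp₂0 j')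
    · rw [Fin.sum_univ_add]
      simp only [Fin.addCases_left, Fin.addCases_right]
      rw [← Finset.mul_sum, ← Finset.mul_sum, hp₁sum, hp₂sum]
      ring
    · intro i hi
      rw [Fin.sum_univ_add]
      simp only [Fin.addCases_left, Fin.addCases_right]
      have e1 : ∑ j : Fin m₁, t * p₁ j * (if i ∈ I₁ j then (1:ℝ) else 0) = t * q' i := by
        simp_rw [mul_assoc]
        rw [← Finset.mul_sum, hmarg₁ i hi]
      have e2 : ∑ j : Fin m₂, (1 - t) * p₂ j * (if i ∈ I₂ j then (1:ℝ) else 0)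
          = (1 - t) * q'' i := by
        simp_rw [mul_assoc]
        rw [← Finset.mul_sum, hmarg₂ i hi]
      rw [e1, e2]
      by_cases h0 : i = i₀
      · subst h0
        rw [hq'i₀, hq''i₀, ht]
        field_simp
        ring
      · by_cases h1 : i = i₁
        · subst h1
          rw [hq'i₁, hq''i₁, ht]
          field_simp
          ring
        · rw [hq'o i h0 h1, hq''o i h0 h1]; ring


lemma proj_bound {H : Type*} [NormedAddCommGroup H] [InnerProductSpace ℝ H]
    (phi : ℕ → H) (hphi : Orthonormal ℝ phi) (f : H) (s : Finset ℕ) :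
    sInf { t : ℝ | ∃ w ∈ Submodule.span ℝ (phi '' ↑s), t = ‖f - w‖ ^ 2 }
      ≤ ‖f‖ ^ 2 - ∑ i ∈ s, ⟪f, phi i⟫ ^ 2 := by
  classical
  set w₀ : H := ∑ i ∈ s, ⟪f, phi i⟫ • phi i with hw₀
  have hmem : w₀ ∈ Submodule.span ℝ (phi '' ↑s) := by
    refine Submodule.sum_mem _ fun i hi => Submodule.smul_mem _ _ ?_
    exact Submodule.subset_span ⟨i, hi, rfl⟩
  have hip : ⟪f, w₀⟫ = ∑ i ∈ s, ⟪f, phi i⟫ ^ 2 := by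
    rw [hw₀, inner_sum]
    refine Finset.sum_congr rfl fun i _ => ?_
    rw [real_inner_smul_right]; ring
  have hnw : ‖w₀‖ ^ 2 = ∑ i ∈ s, ⟪f, phi i⟫ ^ 2 := by
    rw [← real_inner_self_eq_norm_sq, hw₀, hphi.inner_sum]
    refine Finset.sum_congr rfl fun i _ => ?_
    simp [sq]
  have hval : ‖f - w₀‖ ^ 2 = ‖f‖ ^ 2 - ∑ i ∈ s, ⟪f, phi i⟫ ^ 2 := by
    have hc : ⟪w₀, f⟫ = ∑ i ∈ s, ⟪f, phi i⟫ ^ 2 := by rw [real_inner_comm]; exact hip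
    rw [← real_inner_self_eq_norm_sq, inner_sub_sub_self, real_inner_self_eq_norm_sq,
      real_inner_self_eq_norm_sq, hnw, hc, hip]
    ring
  have hbdd : BddBelow { t : ℝ | ∃ w ∈ Submodule.span ℝ (phi '' ↑s), t = ‖f - w‖ ^ 2 } := by
    refine ⟨0, fun t ht => ?_⟩
    obtain ⟨w, _, rfl⟩ := ht
    positivity
  have hmem' : ‖f - w₀‖ ^ 2 ∈ { t : ℝ | ∃ w ∈ Submodule.span ℝ (phi '' ↑s), t = ‖f - w‖ ^ 2 } :=
    ⟨w₀, hmem, rfl⟩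
  calc sInf _ ≤ ‖f - w₀‖ ^ 2 := csInf_le hbdd hmem'
    _ = _ := hval

/-- In the Hilbert-space setting, suppose the integer `ℓ* > r` satisfies
`(ℓ*−r)/λ_{ℓ*} ≤ Σ_{i=1}^{ℓ*} 1/λ_i ≤ (ℓ*−r)/λ_{ℓ*+1}` (0-based: `λ_i = lam (i−1)`).
Then there are finitely many size-`r` subsets `I_1,…,I_m` of `{1,…,ℓ*}` (0-based: subsets
of `range ℓ*`) and weights `p_j ≥ 0` with `Σ_j p_j = 1` such that for every `f ∈ F`,
`Σ_j p_j · inf_{w ∈ span{φ_i : i ∈ I_j}} ‖f − w‖² ≤ (ℓ*−r)/Σ_{i=1}^{ℓ*} 1/λ_i`. -/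
theorem stmt18 {H : Type*} [NormedAddCommGroup H] [InnerProductSpace ℝ H]
    [CompleteSpace H]
    (phi : ℕ → H) (hphi : Orthonormal ℝ phi)
    (htot : (Submodule.span ℝ (Set.range phi)).topologicalClosure = ⊤)
    (lam : ℕ → ℝ) (hpos : ∀ j, 0 < lam j) (hmono : Antitone lam)
    (hlim : Filter.Tendsto lam Filter.atTop (nhds 0))
    (r : ℕ) (hr : 0 < r)
    (lstar : ℕ) (hl : r < lstar)
    (hcond1 : ((lstar : ℝ) - r) / lam (lstar - 1) ≤ ∑ i ∈ Finset.range lstar, 1 / lam i)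
    (hcond2 : ∑ i ∈ Finset.range lstar, 1 / lam i ≤ ((lstar : ℝ) - r) / lam lstar) :
    ∃ (m : ℕ) (I : Fin m → Finset ℕ) (p : Fin m → ℝ),
      (∀ j, I j ⊆ Finset.range lstar) ∧
      (∀ j, (I j).card = r) ∧
      (∀ j, 0 ≤ p j) ∧ (∑ j, p j = 1) ∧
      ∀ f : H, (Summable fun j => ⟪f, phi j⟫ ^ 2 / lam j) →
        (∑' j, ⟪f, phi j⟫ ^ 2 / lam j) ≤ 1 →
        ∑ j, p j * sInf { t : ℝ | ∃ w ∈ Submodule.span ℝ (phi '' ↑(I j)), t = ‖f - w‖ ^ 2 }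
          ≤ ((lstar : ℝ) - r) / ∑ i ∈ Finset.range lstar, 1 / lam i := by
  classical
  set S := ∑ i ∈ Finset.range lstar, 1 / lam i with hS
  have hS0 : 0 < S := Finset.sum_pos (fun i _ => by have := hpos i; positivity)
    ⟨0, Finset.mem_range.mpr (by omega)⟩
  set B := ((lstar : ℝ) - r) / S with hB
  have hlr : (0:ℝ) < (lstar:ℝ) - r := by
    have : (r:ℝ) < lstar := by exact_mod_cast hl
    linarith
  have hB0 : 0 < B := div_pos hlr hS0
  have hBle : B ≤ lam (lstar - 1) := by
    have h := (div_le_iff₀ (hpos (lstar - 1))).mp hcond1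
    rw [hB, div_le_iff₀ hS0]
    linarith [mul_comm S (lam (lstar - 1))]
  have hlamB : lam lstar ≤ B := by
    have h := (le_div_iff₀ (hpos lstar)).mp hcond2
    rw [hB, le_div_iff₀ hS0]
    linarith [mul_comm (lam lstar) S]
  set q : ℕ → ℝ := fun i => if i < lstar then 1 - B / lam i else 0 with hq
  have hqval : ∀ i < lstar, q i = 1 - B / lam i := by
    intro i hi; simp [hq, hi]
  have hqbd : ∀ i ∈ Finset.range lstar, 0 ≤ q i ∧ q i ≤ 1 := by
    intro i hi
    rw [Finset.mem_range] at hi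
    have hilam : B ≤ lam i := le_trans hBle (hmono (by omega))
    rw [hqval i hi]
    constructor
    · have : B / lam i ≤ 1 := (div_le_one (hpos i)).mpr hilam
      linarith
    · have : 0 ≤ B / lam i := le_of_lt (div_pos hB0 (hpos i))
      linarith
  have hqsum : ∑ i ∈ Finset.range lstar, q i = (r : ℝ) := by
    have hpt : ∀ i ∈ Finset.range lstar, q i = 1 - B * (1 / lam i) := by
      intro i hi; rw [Finset.mem_range] at hi
      rw [hqval i hi]
      rw [mul_one_div]
    rw [Finset.sum_congr rfl hpt, Finset.sum_sub_distrib, ← Finset.mul_sum, ← hS,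
      hB, div_mul_cancel₀ _ (ne_of_gt hS0)]
    simp
  obtain ⟨m, I, p, hIsub, hIcard, hp0, hpsum, hmarg⟩ :=
    marginals r _ lstar q le_rfl hqbd hqsum
  refine ⟨m, I, p, hIsub, hIcard, hp0, hpsum, ?_⟩
  intro f hsumf htsumf
  set c : ℕ → ℝ := fun i => ⟪f, phi i⟫ ^ 2 with hc
  have hc0 : ∀ i, 0 ≤ c i := fun i => by simp only [hc]; exact sq_nonneg _
  have hbco : ∀ i, (HilbertBasis.mk hphi (le_of_eq htot.symm)) i = phi i :=
    fun i => congrFun (HilbertBasis.coe_mk hphi (le_of_eq htot.symm)) i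
  have hcs : Summable c := by
    refine ((HilbertBasis.mk hphi (le_of_eq htot.symm)).summable_inner_mul_inner f f).congr
      fun i => ?_
    rw [hbco i]
    simp [hc, sq, real_inner_comm]
  have hpars : ∑' i, c i = ‖f‖ ^ 2 := by
    have h2 := (HilbertBasis.mk hphi (le_of_eq htot.symm)).tsum_inner_mul_inner f f
    rw [real_inner_self_eq_norm_sq] at h2
    rw [← h2]
    exact tsum_congr fun i => by rw [hbco i]; simp [hc, sq, real_inner_comm]
  have hstep1 : ∀ j, p j * sInf { t : ℝ | ∃ w ∈ Submodule.span ℝ (phi '' ↑(I j)),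
      t = ‖f - w‖ ^ 2 } ≤ p j * (‖f‖ ^ 2 - ∑ i ∈ I j, c i) := fun j =>
    mul_le_mul_of_nonneg_left (proj_bound phi hphi f (I j)) (hp0 j)
  have hIsum : ∀ j, ∑ i ∈ I j, c i
      = ∑ i ∈ Finset.range lstar, (if i ∈ I j then (1:ℝ) else 0) * c i := by
    intro j
    simp only [ite_mul, one_mul, zero_mul]
    rw [Finset.sum_ite_mem, Finset.inter_eq_right.mpr (hIsub j)]
  have key : ∑ j, p j * (‖f‖ ^ 2 - ∑ i ∈ I j, c i)
      = ‖f‖ ^ 2 - ∑ i ∈ Finset.range lstar, q i * c i := by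
    simp_rw [mul_sub, Finset.sum_sub_distrib, ← Finset.sum_mul, hpsum, one_mul]
    congr 1
    simp_rw [hIsum, Finset.mul_sum]
    rw [Finset.sum_comm]
    refine Finset.sum_congr rfl fun i hi => ?_
    rw [← hmarg i hi, Finset.sum_mul]
    exact Finset.sum_congr rfl fun j _ => by ring
  have htail : ∑' (i : ↑((↑(Finset.range lstar) : Set ℕ)ᶜ)), c i
      ≤ ∑' (i : ↑((↑(Finset.range lstar) : Set ℕ)ᶜ)), B * (c i / lam i) := by
    refine Summable.tsum_le_tsum ?_ (hcs.subtype _) ((hsumf.mul_left B).subtype _)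
    rintro ⟨i, hi⟩
    simp only [Set.mem_compl_iff, Finset.coe_range, Set.mem_Iio, not_lt] at hi
    have hlami : lam i ≤ B := le_trans (hmono hi) hlamB
    have hg0 : 0 ≤ c i / lam i := div_nonneg (hc0 i) (hpos i).le
    have hci : c i = (c i / lam i) * lam i := (div_mul_cancel₀ (c i) (ne_of_gt (hpos i))).symm
    calc c i = (c i / lam i) * lam i := hci
      _ ≤ (c i / lam i) * B := mul_le_mul_of_nonneg_left hlami hg0
      _ = B * (c i / lam i) := mul_comm _ _
  have hfin : ∑ i ∈ Finset.range lstar, (c i - q i * c i)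
      = B * ∑ i ∈ Finset.range lstar, c i / lam i := by
    rw [Finset.mul_sum]
    refine Finset.sum_congr rfl fun i hi => ?_
    rw [Finset.mem_range] at hi
    rw [hqval i hi]
    field_simp
    ring
  have hsplitc := Summable.sum_add_tsum_compl (s := Finset.range lstar) hcs
  have hsplitg := Summable.sum_add_tsum_compl (s := Finset.range lstar) hsumf
  calc ∑ j, p j * sInf { t : ℝ | ∃ w ∈ Submodule.span ℝ (phi '' ↑(I j)), t = ‖f - w‖ ^ 2 }
      ≤ ∑ j, p j * (‖f‖ ^ 2 - ∑ i ∈ I j, c i) :=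
        Finset.sum_le_sum fun j _ => hstep1 j
    _ = ‖f‖ ^ 2 - ∑ i ∈ Finset.range lstar, q i * c i := key
    _ = ∑ i ∈ Finset.range lstar, (c i - q i * c i)
        + ∑' (i : ↑((↑(Finset.range lstar) : Set ℕ)ᶜ)), c i := by
        rw [Finset.sum_sub_distrib, ← hpars, ← hsplitc]; ring
    _ ≤ B * ∑ i ∈ Finset.range lstar, (c i / lam i)
        + ∑' (i : ↑((↑(Finset.range lstar) : Set ℕ)ᶜ)), B * (c i / lam i) := by
        rw [hfin]; exact add_le_add_right htail _
    _ = B * (∑ i ∈ Finset.range lstar, (c i / lam i)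
        + ∑' (i : ↑((↑(Finset.range lstar) : Set ℕ)ᶜ)), (c i / lam i)) := by
        rw [mul_add, tsum_mul_left]
    _ = B * ∑' i, c i / lam i := by rw [hsplitg]
    _ ≤ B * 1 := mul_le_mul_of_nonneg_left htsumf hB0.le
    _ = B := mul_one B
end
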